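/- Let ψ : [0,∞) → [0,∞) be a sub-root function with unique fixed point r*, and let a ≥ 0. Then ψ_a(r) := ψ(r) + a is also a sub-root function, and its fixed point r*_a satisfies r* ≤ r*_a ≤ r* + 2a. -/
import Mathlib


/-- A function `ψ : [0,∞) → [0,∞)` is sub-root if it is nonnegative, nondecreasing,
and `r ↦ ψ(r)/√r` is nonincreasing for `r > 0`. -/
def SubRoot (ψ : ℝ → ℝ) : Prop :=
  (∀ r : ℝ, 0 ≤ r → 0 ≤ ψ r) ∧
  (∀ r s : ℝ, 0 ≤ r → r ≤ s → ψ r ≤ ψ s) ∧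
  (∀ r s : ℝ, 0 < r → r ≤ s → ψ s / Real.sqrt s ≤ ψ r / Real.sqrt r)

theorem stmt_2 (ψ : ℝ → ℝ) (hψ : SubRoot ψ) (rstar : ℝ) (hrstar_pos : 0 < rstar)
    (hfix : ψ rstar = rstar)
    (huniq : ∀ r : ℝ, 0 < r → ψ r = r → r = rstar)
    (a : ℝ) (ha : 0 ≤ a) :
    SubRoot (fun r => ψ r + a) ∧
      ∀ ra : ℝ, 0 < ra → ψ ra + a = ra → rstar ≤ ra ∧ ra ≤ rstar + 2 * a := by
  obtain ⟨h0, hmono, hdiv⟩ := hψ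
  have hsub : SubRoot (fun r => ψ r + a) := by
    refine ⟨fun r hr => by have := h0 r hr; positivity,
      fun r s hr hrs => by dsimp only; have := hmono r s hr hrs; linarith, ?_⟩
    intro r s hr hrs
    have hs : (0:ℝ) < s := lt_of_lt_of_le hr hrs
    have h1 : ψ s / Real.sqrt s ≤ ψ r / Real.sqrt r := hdiv r s hr hrs
    have h2 : a / Real.sqrt s ≤ a / Real.sqrt r := by
      apply div_le_div_of_nonneg_left ha (Real.sqrt_pos.2 hr)
      exact Real.sqrt_le_sqrt hrs
    have e1 : (ψ s + a) / Real.sqrt s = ψ s / Real.sqrt s + a / Real.sqrt s :=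
      add_div _ _ _
    have e2 : (ψ r + a) / Real.sqrt r = ψ r / Real.sqrt r + a / Real.sqrt r :=
      add_div _ _ _
    simp only [e1, e2]
    linarith
  refine ⟨hsub, fun ra hra hfa => ?_⟩
  have hsra : (0:ℝ) < Real.sqrt ra := Real.sqrt_pos.2 hra
  have hsstar : (0:ℝ) < Real.sqrt rstar := Real.sqrt_pos.2 hrstar_pos
  constructor
  · by_contra h
    push_neg at h
    have hd := hdiv ra rstar hra h.le
    rw [hfix, Real.div_sqrt] at hd
    have h1 : Real.sqrt rstar * Real.sqrt ra ≤ ψ ra := (le_div_iff₀ hsra).1 hd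
    have h2 : Real.sqrt ra * Real.sqrt ra < Real.sqrt rstar * Real.sqrt ra :=
      mul_lt_mul_of_pos_right (Real.sqrt_lt_sqrt hra.le h) hsra
    rw [Real.mul_self_sqrt hra.le] at h2
    linarith
  · set R := rstar + 2 * a with hR
    have hRpos : (0:ℝ) < R := by positivity
    have hsR : (0:ℝ) < Real.sqrt R := Real.sqrt_pos.2 hRpos
    -- ψ R ≤ rstar + a
    have hd := hdiv rstar R hrstar_pos (by linarith)
    rw [hfix, Real.div_sqrt] at hd
    have h1 : ψ R ≤ Real.sqrt rstar * Real.sqrt R := by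
      rw [div_le_iff₀ hsR] at hd; linarith
    have h2 : Real.sqrt rstar * Real.sqrt R ≤ rstar + a := by
      rw [← Real.sqrt_mul hrstar_pos.le]
      have : rstar * R ≤ (rstar + a) ^ 2 := by nlinarith
      calc Real.sqrt (rstar * R) ≤ Real.sqrt ((rstar + a) ^ 2) :=
            Real.sqrt_le_sqrt this
        _ = rstar + a := Real.sqrt_sq (by positivity)
    have hpsiR : ψ R + a ≤ R := by linarith
    by_contra h
    push_neg at h
    have hd2 := hsub.2.2 R ra hRpos h.le
    simp only at hd2
    rw [hfa, Real.div_sqrt] at hd2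
    have h3 : Real.sqrt ra ≤ Real.sqrt R := by
      calc Real.sqrt ra ≤ (ψ R + a) / Real.sqrt R := hd2
        _ ≤ R / Real.sqrt R := by gcongr
        _ = Real.sqrt R := Real.div_sqrt
    have := Real.sqrt_lt_sqrt hRpos.le h
    linarith
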